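/- There exists δ₁ = δ₁(d,m) ∈ (0,1) such that for every δ ∈ (0,δ₁) the following holds. Let V be a finite family of closed balls in ℝ^d with radii in [1,m]. Suppose K₁ = B(y₁,ρ₁) and K₂ = B(y₂,ρ₂) with ρ₁,ρ₂ ∈ [1,m] intersect no ball of V, y₁ ∉ K₂, and K₁ ∩ K₂ ≠ ∅. Choose y₂' on the segment [y₁,y₂] with |y₂ − y₂'| = δ. Then for every ρ' ∈ (δ² + ρ₂ − δ, 2δ² + ρ₂ − δ) and every y' ∈ B(y₂', δ²), the ball B(y',ρ') intersects B(y₁,ρ₁) and intersects no ball of V. -/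

import Mathlib

open Metric Set
open scoped InnerProductSpace

private lemma balls_meet {E : Type*} [NormedAddCommGroup E] [NormedSpace ℝ E]
    (x y : E) {r s : ℝ} (hr : 0 ≤ r) (hs : 0 ≤ s) (h : dist x y ≤ r + s) :
    (closedBall x r ∩ closedBall y s).Nonempty := by
  rcases le_or_gt (dist x y) r with h0 | h0
  · exact ⟨y, by simpa [mem_closedBall, dist_comm] using h0, mem_closedBall_self hs⟩
  · have hd : 0 < dist x y := hr.trans_lt h0
    refine ⟨x + (r / dist x y) • (y - x), ?_, ?_⟩
    · have h1 : dist (x + (r / dist x y) • (y - x)) x = r := by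
        rw [dist_eq_norm, add_sub_cancel_left, norm_smul, Real.norm_eq_abs,
          abs_of_nonneg (div_nonneg hr hd.le), ← dist_eq_norm', div_mul_cancel₀ _ hd.ne']
      simp [mem_closedBall, h1]
    · have h2 : x + (r / dist x y) • (y - x) - y = (r / dist x y - 1) • (y - x) := by
        rw [sub_smul, one_smul]; abel
      have h3 : dist (x + (r / dist x y) • (y - x)) y = dist x y - r := by
        rw [dist_eq_norm, h2, norm_smul, Real.norm_eq_abs, ← dist_eq_norm',
          abs_of_nonpos (by rw [sub_nonpos, div_le_one hd]; exact h0.le)]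
        field_simp
        ring
      rw [mem_closedBall, h3]
      linarith

private lemma balls_far {E : Type*} [NormedAddCommGroup E] [NormedSpace ℝ E]
    (x y : E) {r s : ℝ} (hr : 0 ≤ r) (hs : 0 ≤ s)
    (h : closedBall x r ∩ closedBall y s = ∅) : r + s < dist x y := by
  by_contra hc
  push_neg at hc
  obtain ⟨z, hz⟩ := balls_meet x y hr hs hc
  rw [h] at hz
  exact hz

private lemma arith_star {m δ ρ₂ A IP dxy : ℝ} (hm : (1:ℝ) ≤ m)
    (hδ0 : 0 < δ) (hδs : δ < 1/100) (hρ1 : 1 ≤ ρ₂) (hρ2 : ρ₂ ≤ m)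
    (hA : A ≤ ρ₂ - δ + 3*δ^2) (hA0 : 0 ≤ A) (hgt : ρ₂ < dxy)
    (hid : dxy^2 = A^2 - 2*IP + δ^2) :
    2*IP ≤ -2*δ*ρ₂ + (2+6*m)*δ^2 := by
  nlinarith [mul_self_le_mul_self hA0 hA,
    mul_nonneg (mul_nonneg hδ0.le hδ0.le) (by linarith : (0:ℝ) ≤ m - ρ₂),
    mul_nonneg (mul_nonneg (mul_nonneg hδ0.le hδ0.le) hδ0.le) (by linarith : (0:ℝ) ≤ 6 - 9*δ),
    mul_self_le_mul_self (by linarith : (0:ℝ) ≤ ρ₂) hgt.le]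

private lemma arith_X1 {m δ ρ₁ ρ₂ D A IP X : ℝ}
    (hm : (1:ℝ) ≤ m) (hδ0 : 0 < δ) (hδs : δ < 1/100)
    (hρ₁1 : 1 ≤ ρ₁) (hρ₁2 : ρ₁ ≤ m) (hρ₂1 : 1 ≤ ρ₂) (hρ₂2 : ρ₂ ≤ m)
    (hD1 : ρ₂ < D) (hD2 : D ≤ ρ₁ + ρ₂)
    (hA : A ≤ ρ₂ - δ + 3*δ^2) (hA0 : 0 ≤ A)
    (key : 2*IP ≤ (D - δ) * (-2*ρ₂ + (2+6*m)*δ))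
    (hid : X = A^2 + 2*IP + (D - δ)^2) :
    X ≤ ρ₁^2 + 30*m^2*δ := by
  nlinarith [key, mul_self_le_mul_self hA0 hA,
    mul_nonneg (by linarith : (0:ℝ) ≤ ρ₁ + ρ₂ + δ - D) (by linarith : (0:ℝ) ≤ D - ρ₂),
    mul_nonneg (by linarith : (0:ℝ) ≤ ρ₁) (by linarith : (0:ℝ) ≤ ρ₁ + ρ₂ - D),
    mul_nonneg (mul_nonneg (by linarith : (0:ℝ) ≤ m) hδ0.le) (by linarith : (0:ℝ) ≤ 2*m - D),
    mul_nonneg hδ0.le (by linarith : (0:ℝ) ≤ 2*m - D),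
    mul_nonneg (mul_nonneg (by linarith : (0:ℝ) ≤ m) hδ0.le) (by linarith : (0:ℝ) ≤ m - 1),
    mul_nonneg hδ0.le (by linarith : (0:ℝ) ≤ 1/100 - δ),
    mul_nonneg (mul_nonneg (by linarith : (0:ℝ) ≤ m) hδ0.le) (by linarith : (0:ℝ) ≤ 1/100 - δ),
    mul_nonneg (mul_nonneg hδ0.le hδ0.le) (by linarith : (0:ℝ) ≤ m - ρ₂)]

private lemma arith_P {m δ ρ₁ ρp B P X Q : ℝ}
    (hδ0 : 0 < δ) (hρ₁1 : 1 ≤ ρ₁) (hρp1 : 1 ≤ ρp)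
    (hB : B ≤ ρp) (hB0 : 0 ≤ B)
    (hQ : ρ₁ + ρp < Q)
    (hX : X ≤ ρ₁^2 + 30*m^2*δ)
    (hid : Q^2 = B^2 + 2*P + X) :
    2*ρ₁*ρp - 30*m^2*δ < 2*P := by
  nlinarith [mul_self_le_mul_self hB0 hB,
    mul_self_le_mul_self (by linarith : (0:ℝ) ≤ ρ₁ + ρp) hQ.le]

private lemma arith_P2 {m δ ρ₂ ρp B P X2 Q : ℝ}
    (hm : (1:ℝ) ≤ m) (hδ0 : 0 < δ) (hδs : δ < 1/100)
    (hρ₂1 : 1 ≤ ρ₂) (hρ₂2 : ρ₂ ≤ m) (hρp1 : 1 ≤ ρp)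
    (hB : B ≤ ρp) (hB0 : 0 ≤ B)
    (hQ : ρ₂ + ρp < Q)
    (hX2 : X2 ≤ ρ₂ + 3*δ^2) (hX20 : 0 ≤ X2)
    (hid : Q^2 = B^2 + 2*P + X2^2) :
    2*ρ₂*ρp - 30*m^2*δ < 2*P := by
  nlinarith [mul_self_le_mul_self hB0 hB,
    mul_self_le_mul_self (by linarith : (0:ℝ) ≤ ρ₂ + ρp) hQ.le,
    mul_self_le_mul_self hX20 hX2,
    mul_nonneg hδ0.le (by linarith : (0:ℝ) ≤ 1/100 - δ),
    mul_nonneg (mul_nonneg hδ0.le hδ0.le) (by linarith : (0:ℝ) ≤ m - ρ₂),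
    mul_nonneg (mul_nonneg (mul_nonneg hδ0.le hδ0.le) hδ0.le) hδ0.le,
    mul_nonneg (mul_nonneg (by linarith : (0:ℝ) ≤ m) hδ0.le) (by linarith : (0:ℝ) ≤ m - 1),
    mul_nonneg (mul_nonneg (by linarith : (0:ℝ) ≤ m) hδ0.le) (by linarith : (0:ℝ) ≤ 1/100 - δ)]

private lemma arith_V {m δ ρ₁ ρ₂ D A IP Vn : ℝ}
    (hm : (1:ℝ) ≤ m) (hδ0 : 0 < δ) (hδs : δ < 1/100)
    (hρ₁1 : 1 ≤ ρ₁) (hρ₁2 : ρ₁ ≤ m) (hρ₂1 : 1 ≤ ρ₂) (hρ₂2 : ρ₂ ≤ m)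
    (hD1 : ρ₂ < D) (hD2 : D ≤ ρ₁ + ρ₂)
    (hA : A ≤ ρ₂) (hA0 : 0 ≤ A)
    (key : 2*IP ≤ (D - 2*δ) * (-2*ρ₂ + (2+6*m)*δ))
    (hV0 : 0 ≤ Vn)
    (hid : Vn^2 = 4*A^2 + 4*IP + (D - 2*δ)^2) :
    Vn ≤ ρ₁ + ρ₂ - 1 + 2*δ + 32*m^2*δ := by
  have hm0 : (0:ℝ) < m := by linarith
  have hsq : (D - 2*δ - 2*ρ₂)^2 ≤ (ρ₁ + ρ₂ - 1 + 2*δ)^2 :=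
    sq_le_sq' (by linarith) (by linarith)
  have hVsq : Vn^2 ≤ (ρ₁ + ρ₂ - 1 + 2*δ + 32*m^2*δ)^2 := by
    nlinarith [key, hsq, mul_self_le_mul_self hA0 hA,
      mul_nonneg hδ0.le (by linarith : (0:ℝ) ≤ 2*m - D),
      mul_nonneg (mul_nonneg hm0.le hδ0.le) (by linarith : (0:ℝ) ≤ 2*m - D),
      mul_nonneg (mul_nonneg hm0.le hδ0.le) (by linarith : (0:ℝ) ≤ m - 1),
      mul_nonneg (mul_nonneg (mul_nonneg hm0.le hm0.le) hδ0.le)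
        (by linarith : (0:ℝ) ≤ ρ₁ + ρ₂ - 1 + 2*δ - 1),
      sq_nonneg (32*m^2*δ), mul_nonneg (mul_nonneg hm0.le hm0.le) hδ0.le]
  nlinarith [hVsq, hV0, mul_nonneg (mul_nonneg hm0.le hm0.le) hδ0.le]

private lemma arith_final {m δ ρ₁ ρ₂ ρp P1 P2 : ℝ}
    (hm : (1.1:ℝ) ≤ m) (hδ0 : 0 < δ) (hδm3 : δ * (100 * m^3) < 1)
    (hρ₁1 : 1 ≤ ρ₁) (hρ₁2 : ρ₁ ≤ m) (hρ₂1 : 1 ≤ ρ₂) (hρ₂2 : ρ₂ ≤ m)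
    (hρp1 : 1 ≤ ρp) (hρp2 : ρp ≤ m)
    (hP1 : 2*ρ₁*ρp - 30*m^2*δ < 2*P1)
    (hP2 : 2*ρ₂*ρp - 30*m^2*δ < 2*P2)
    (hCS : P1 + P2 ≤ ρp * (ρ₁ + ρ₂ - 1 + 2*δ + 32*m^2*δ)) :
    False := by
  have hm0 : (0:ℝ) < m := by linarith
  nlinarith [hP1, hP2, hCS,
    mul_nonneg (mul_nonneg hδ0.le (mul_nonneg hm0.le hm0.le)) (by linarith : (0:ℝ) ≤ m - 1),
    mul_nonneg (mul_nonneg hδ0.le hm0.le) (by nlinarith : (0:ℝ) ≤ m^2 - 1),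
    mul_nonneg hδ0.le (by linarith : (0:ℝ) ≤ m - ρp),
    mul_nonneg (mul_nonneg hδ0.le (mul_nonneg hm0.le hm0.le)) (by linarith : (0:ℝ) ≤ m - ρp),
    mul_nonneg hδ0.le (by linarith : (0:ℝ) ≤ ρ₁ + ρ₂ - 2)]

set_option maxHeartbeats 2000000 in
/-- perturbation lemma: there exists `δ₁ = δ₁(d,m) ∈ (0,1)` such that for
every `δ ∈ (0,δ₁)`, any ball obtained by perturbing `K₂ = B(y₂,ρ₂)` as described (center
moved by `δ` towards `y₁` up to an error `δ²`, radius in `(δ² + ρ₂ − δ, 2δ² + ρ₂ − δ)`)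
still intersects `K₁ = B(y₁,ρ₁)` and intersects no ball of the family `V`. -/
theorem perturbation_lemma (d : ℕ) (m : ℝ) (hm : (1.1 : ℝ) ≤ m) :
    ∃ δ₁ : ℝ, δ₁ ∈ Set.Ioo (0 : ℝ) 1 ∧
      ∀ δ ∈ Set.Ioo (0 : ℝ) δ₁,
      ∀ V : Finset (EuclideanSpace ℝ (Fin d) × ℝ),
        (∀ p ∈ V, p.2 ∈ Set.Icc (1 : ℝ) m) →
      ∀ y₁ y₂ : EuclideanSpace ℝ (Fin d), ∀ ρ₁ ρ₂ : ℝ,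
        ρ₁ ∈ Set.Icc (1 : ℝ) m → ρ₂ ∈ Set.Icc (1 : ℝ) m →
        (∀ p ∈ V, closedBall y₁ ρ₁ ∩ closedBall p.1 p.2 = ∅) →
        (∀ p ∈ V, closedBall y₂ ρ₂ ∩ closedBall p.1 p.2 = ∅) →
        y₁ ∉ closedBall y₂ ρ₂ →
        (closedBall y₁ ρ₁ ∩ closedBall y₂ ρ₂).Nonempty →
      ∀ y₂' ∈ segment ℝ y₁ y₂, dist y₂ y₂' = δ →
      ∀ ρ' ∈ Set.Ioo (δ ^ 2 + ρ₂ - δ) (2 * δ ^ 2 + ρ₂ - δ),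
      ∀ y' ∈ closedBall y₂' (δ ^ 2),
        (closedBall y₁ ρ₁ ∩ closedBall y' ρ').Nonempty ∧
        ∀ p ∈ V, closedBall y' ρ' ∩ closedBall p.1 p.2 = ∅ := by
  have hm1 : (1:ℝ) ≤ m := by linarith
  have hm0 : (0:ℝ) < m := by linarith
  have hm3 : (1:ℝ) ≤ m^3 := one_le_pow₀ hm1
  refine ⟨(100 * m^3)⁻¹, ⟨by positivity, by rw [inv_lt_one_iff₀]; exact Or.inr (by nlinarith)⟩, ?_⟩
  rintro δ ⟨hδ0, hδup⟩ V hV y₁ y₂ ρ₁ ρ₂ hρ₁ hρ₂ hV1 hV2 hy₁ hK y₂' hseg hyd ρ' hρ' y' hy'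
  -- basic smallness facts about δ
  have hδm3 : δ * (100 * m^3) < 1 := by
    rw [← lt_div_iff₀ (by positivity : (0:ℝ) < 100 * m^3)] at *
    simpa [one_div] using hδup
  have hδs : δ < 1/100 := by nlinarith [mul_nonneg hδ0.le (sub_nonneg.2 hm3)]
  -- distance facts
  obtain ⟨D, hDdef⟩ : ∃ r : ℝ, r = dist y₁ y₂ := ⟨_, rfl⟩
  have hD1 : ρ₂ < D := by
    rw [mem_closedBall] at hy₁; push_neg at hy₁; rw [hDdef]; exact hy₁
  have hD2 : D ≤ ρ₁ + ρ₂ := by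
    obtain ⟨z, hz1, hz2⟩ := hK
    rw [mem_closedBall] at hz1 hz2
    rw [hDdef]
    calc dist y₁ y₂ ≤ dist y₁ z + dist z y₂ := dist_triangle _ _ _
    _ ≤ ρ₁ + ρ₂ := by rw [dist_comm y₁ z]; linarith
  have hD0 : (0:ℝ) < D := lt_of_le_of_lt (by linarith [hρ₂.1] : (0:ℝ) ≤ ρ₂) hD1
  -- segment decomposition
  obtain ⟨s, t, hs, ht, hst, heq⟩ := hseg
  have hts : t = 1 - s := by linarith
  have hw : y₂ - y₂' = s • (y₂ - y₁) := by rw [← heq, hts]; module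
  have hc : y₂' - y₁ = t • (y₂ - y₁) := by rw [← heq, hts]; module
  have hDnorm : ‖y₂ - y₁‖ = D := by rw [hDdef]; exact (dist_eq_norm' y₁ y₂).symm
  have hwnorm : ‖y₂ - y₂'‖ = δ := by rw [← dist_eq_norm]; exact hyd
  have hsD : s * D = δ := by
    rw [hw, norm_smul, Real.norm_eq_abs, abs_of_nonneg hs, hDnorm] at hwnorm
    exact hwnorm
  have hs0 : 0 < s := by nlinarith
  have htD : t * D = D - δ := by linear_combination D * hst - hsD
  have hcnorm : ‖y₂' - y₁‖ = D - δ := by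
    rw [hc, norm_smul, Real.norm_eq_abs, abs_of_nonneg ht, hDnorm, htD]
  have hd12' : dist y₁ y₂' = D - δ := by rw [dist_eq_norm']; exact hcnorm
  have hdyy' : dist y' y₂' ≤ δ^2 := mem_closedBall.1 hy'
  constructor
  · -- the perturbed ball still meets K₁
    apply balls_meet _ _ (by linarith [hρ₁.1] : (0:ℝ) ≤ ρ₁)
      (by nlinarith [hρ'.1, hρ₂.1] : (0:ℝ) ≤ ρ')
    calc dist y₁ y' ≤ dist y₁ y₂' + dist y₂' y' := dist_triangle _ _ _
      _ = (D - δ) + dist y' y₂' := by rw [hd12', dist_comm]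
      _ ≤ ρ₁ + ρ' := by nlinarith [hρ'.1]
  · -- the perturbed ball meets no ball of V
    intro p hp
    by_contra hne
    obtain ⟨x, hx1, hx2⟩ := Set.nonempty_iff_ne_empty.2 hne
    rw [mem_closedBall] at hx1 hx2
    have hρp := hV p hp
    have hq1 : ρ₁ + p.2 < dist y₁ p.1 :=
      balls_far _ _ (by linarith [hρ₁.1]) (by linarith [hρp.1]) (hV1 p hp)
    have hq2 : ρ₂ + p.2 < dist y₂ p.1 :=
      balls_far _ _ (by linarith [hρ₂.1]) (by linarith [hρp.1]) (hV2 p hp)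
    by_cases hxy2 : dist x y₂ ≤ ρ₂
    · have hmem : x ∈ closedBall y₂ ρ₂ ∩ closedBall p.1 p.2 := ⟨hxy2, hx2⟩
      rw [hV2 p hp] at hmem
      exact hmem
    push_neg at hxy2
    -- the scalar L with y₂' - y₁ = L • (y₂ - y₂')
    obtain ⟨L, hL0, hLw, hLd⟩ :
        ∃ L : ℝ, 0 ≤ L ∧ y₂' - y₁ = L • (y₂ - y₂') ∧ L * δ = D - δ := by
      refine ⟨t / s, div_nonneg ht hs0.le, ?_, ?_⟩
      · rw [hc, hw, smul_smul, div_mul_cancel₀ _ hs0.ne']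
      · have e : t / s * δ = t * D := by
          rw [← hsD]; field_simp [hs0.ne']
        rw [e, htD]
    have hL1 : (1:ℝ) ≤ L := by
      have h1 : 1 * δ ≤ L * δ := by rw [one_mul, hLd]; linarith [hρ₂.1]
      exact le_of_mul_le_mul_right h1 hδ0
    have hA : ‖x - y₂'‖ ≤ ρ₂ - δ + 3*δ^2 := by
      have h1 : dist x y₂' ≤ dist x y' + dist y' y₂' := dist_triangle _ _ _
      rw [← dist_eq_norm]
      linarith [hρ'.2]
    have hA0 : (0:ℝ) ≤ ‖x - y₂'‖ := norm_nonneg _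
    have hAρ₂ : ‖x - y₂'‖ ≤ ρ₂ := by
      linarith [mul_nonneg hδ0.le (by linarith : (0:ℝ) ≤ 1 - 3*δ)]
    -- the key inner product bound (★)
    have hstar : 2 * ⟪x - y₂', y₂ - y₂'⟫_ℝ ≤ -2*δ*ρ₂ + (2+6*m)*δ^2 := by
      have e : x - y₂ = (x - y₂') - (y₂ - y₂') := (sub_sub_sub_cancel_right x y₂ y₂').symm
      have hid : dist x y₂ ^ 2 = ‖x - y₂'‖^2 - 2*⟪x - y₂', y₂ - y₂'⟫_ℝ + δ^2 := by
        rw [dist_eq_norm, e, norm_sub_sq_real, hwnorm]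
      exact arith_star hm1 hδ0 hδs hρ₂.1 hρ₂.2 hA hA0 hxy2 hid
    have key1 : 2*⟪x - y₂', y₂' - y₁⟫_ℝ ≤ (D - δ) * (-2*ρ₂ + (2+6*m)*δ) := by
      have e1 : ⟪x - y₂', y₂' - y₁⟫_ℝ = L * ⟪x - y₂', y₂ - y₂'⟫_ℝ := by
        rw [hLw, real_inner_smul_right]
      have e2 := mul_le_mul_of_nonneg_left hstar hL0
      have e3 : L * (-2*δ*ρ₂ + (2+6*m)*δ^2) = (D - δ) * (-2*ρ₂ + (2+6*m)*δ) := by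
        linear_combination (-2*ρ₂ + (2+6*m)*δ) * hLd
      rw [e1]; linarith
    have e0 : (y₂' - y₁) - (y₂ - y₂') = (L - 1) • (y₂ - y₂') := by
      rw [sub_smul, one_smul, ← hLw]
    have key2 : 2*⟪x - y₂', (y₂' - y₁) - (y₂ - y₂')⟫_ℝ
        ≤ (D - 2*δ) * (-2*ρ₂ + (2+6*m)*δ) := by
      have e1 : ⟪x - y₂', (y₂' - y₁) - (y₂ - y₂')⟫_ℝ
          = (L-1) * ⟪x - y₂', y₂ - y₂'⟫_ℝ := by
        rw [e0, real_inner_smul_right]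
      have e2 := mul_le_mul_of_nonneg_left hstar (by linarith : (0:ℝ) ≤ L - 1)
      have e3 : (L-1) * (-2*δ*ρ₂ + (2+6*m)*δ^2) = (D - 2*δ) * (-2*ρ₂ + (2+6*m)*δ) := by
        linear_combination (-2*ρ₂ + (2+6*m)*δ) * hLd
      rw [e1]; linarith
    -- bound on ‖x - y₁‖²
    have hX1 : ‖x - y₁‖^2 ≤ ρ₁^2 + 30*m^2*δ := by
      have e : x - y₁ = (x - y₂') + (y₂' - y₁) := (sub_add_sub_cancel x y₂' y₁).symm
      have hid : ‖x - y₁‖^2 = ‖x - y₂'‖^2 + 2*⟪x - y₂', y₂' - y₁⟫_ℝ + (D - δ)^2 := by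
        rw [e, norm_add_sq_real, hcnorm]
      exact arith_X1 hm1 hδ0 hδs hρ₁.1 hρ₁.2 hρ₂.1 hρ₂.2 hD1 hD2 hA hA0 key1 hid
    have hb : ‖p.1 - x‖ ≤ p.2 := by rw [← dist_eq_norm']; exact hx2
    have hq1' : ρ₁ + p.2 < ‖p.1 - y₁‖ := by rw [← dist_eq_norm']; exact hq1
    have hq2' : ρ₂ + p.2 < ‖p.1 - y₂‖ := by rw [← dist_eq_norm']; exact hq2
    have hP1 : 2*ρ₁*p.2 - 30*m^2*δ < 2*⟪p.1 - x, x - y₁⟫_ℝ := by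
      have e : p.1 - y₁ = (p.1 - x) + (x - y₁) := (sub_add_sub_cancel p.1 x y₁).symm
      have hid : ‖p.1 - y₁‖^2 = ‖p.1 - x‖^2 + 2*⟪p.1 - x, x - y₁⟫_ℝ + ‖x - y₁‖^2 := by
        rw [e, norm_add_sq_real]
      exact arith_P hδ0 hρ₁.1 hρp.1 hb (norm_nonneg _) hq1' hX1 hid
    have hX2n : ‖x - y₂‖ ≤ ρ₂ + 3*δ^2 := by
      have e : x - y₂ = (x - y₂') - (y₂ - y₂') := (sub_sub_sub_cancel_right x y₂ y₂').symm
      calc ‖x - y₂‖ = ‖(x - y₂') - (y₂ - y₂')‖ := by rw [e]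
        _ ≤ ‖x - y₂'‖ + ‖y₂ - y₂'‖ := norm_sub_le _ _
        _ ≤ ρ₂ + 3*δ^2 := by rw [hwnorm]; linarith
    have hP2 : 2*ρ₂*p.2 - 30*m^2*δ < 2*⟪p.1 - x, x - y₂⟫_ℝ := by
      have e : p.1 - y₂ = (p.1 - x) + (x - y₂) := (sub_add_sub_cancel p.1 x y₂).symm
      have hid : ‖p.1 - y₂‖^2 = ‖p.1 - x‖^2 + 2*⟪p.1 - x, x - y₂⟫_ℝ + ‖x - y₂‖^2 := by
        rw [e, norm_add_sq_real]
      exact arith_P2 hm1 hδ0 hδs hρ₂.1 hρ₂.2 hρp.1 hb (norm_nonneg _) hq2' hX2n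
        (norm_nonneg _) hid
    -- bound on the norm of the sum vector
    have hcw : ‖(y₂' - y₁) - (y₂ - y₂')‖ = D - 2*δ := by
      rw [e0, norm_smul, Real.norm_eq_abs, abs_of_nonneg (by linarith : (0:ℝ) ≤ L - 1),
        hwnorm]
      linear_combination hLd
    have hveq : (x - y₁) + (x - y₂) = (2:ℝ) • (x - y₂') + ((y₂' - y₁) - (y₂ - y₂')) := by
      module
    have hVn : ‖(x - y₁) + (x - y₂)‖ ≤ ρ₁ + ρ₂ - 1 + 2*δ + 32*m^2*δ := by
      have hid : ‖(x - y₁) + (x - y₂)‖^2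
          = 4*‖x - y₂'‖^2 + 4*⟪x - y₂', (y₂' - y₁) - (y₂ - y₂')⟫_ℝ + (D - 2*δ)^2 := by
        rw [hveq, norm_add_sq_real, hcw, norm_smul, real_inner_smul_left]
        simp [Real.norm_eq_abs]
        ring
      exact arith_V hm1 hδ0 hδs hρ₁.1 hρ₁.2 hρ₂.1 hρ₂.2 hD1 hD2 hAρ₂ hA0 key2
        (norm_nonneg _) hid
    have hCS : ⟪p.1 - x, x - y₁⟫_ℝ + ⟪p.1 - x, x - y₂⟫_ℝ
        ≤ p.2 * (ρ₁ + ρ₂ - 1 + 2*δ + 32*m^2*δ) := by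
      have hsplit : ⟪p.1 - x, (x - y₁) + (x - y₂)⟫_ℝ
          = ⟪p.1 - x, x - y₁⟫_ℝ + ⟪p.1 - x, x - y₂⟫_ℝ := inner_add_right _ _ _
      rw [← hsplit]
      exact le_trans (real_inner_le_norm _ _)
        (mul_le_mul hb hVn (norm_nonneg _) (by linarith [hρp.1]))
    exact arith_final hm hδ0 hδm3 hρ₁.1 hρ₁.2 hρ₂.1 hρ₂.2 hρp.1 hρp.2 hP1 hP2 hCS
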